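/- arXiv:0812.3537 — 2 statements merged into one kernel-verified Lean document; each statement's English description precedes it below -/
import Mathlib

section
/- Let (Ω, μ) be a probability space, v : Ω → ℝ measurable with 0 ≤ v ≤ R a.e., mean v̄ ∈ (0, R), ζ ∈ (v̄, R), v_E(x) = min(ζ, v(x)) − v̄, v̄_E = ∫ v_E dμ. Then there exists δ₀ > 0 depending only on |E| = ζ − v̄ and v̄ such that for every 0 < δ < δ₀: ‖v − v̄‖_{L¹} ≤ δ + 8(1 + R/δ) ‖v_E − v̄_E‖_{L¹}. -/
open MeasureTheory

/-- Lemma (ndloc): there is `δ₀ > 0`, depending only on `|E| = ζ - v̄` and `v̄`, such that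
for all `0 < δ < δ₀`, `‖v - v̄‖_{L¹} ≤ δ + 8 (1 + R/δ) ‖v_E - v̄_E‖_{L¹}`. -/
theorem ndloc (c m : ℝ) (hc : 0 < c) (hm : 0 < m) :
    ∃ δ₀ > 0, ∀ (Ω : Type) (_ : MeasurableSpace Ω) (μ : Measure Ω)
      (_ : IsProbabilityMeasure μ) (R : ℝ) (v : Ω → ℝ), Measurable v →
      (∀ᵐ x ∂μ, 0 ≤ v x ∧ v x ≤ R) → (∫ x, v x ∂μ) = m →
      ∀ ζ : ℝ, ζ = m + c → ζ < R →
      ∀ δ : ℝ, 0 < δ → δ < δ₀ →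
        ∫ x, |v x - m| ∂μ ≤
          δ + 8 * (1 + R / δ) *
            ∫ x, |(min ζ (v x) - m) - ∫ y, (min ζ (v y) - m) ∂μ| ∂μ := by
  refine ⟨c, hc, ?_⟩
  intro Ω _ μ _ R v hv hbd hmean ζ hζ hζR δ hδ hδc
  have hζpos : 0 < ζ := by rw [hζ]; linarith
  have hR : 0 < R := hζpos.trans hζR
  -- integrability
  have hv_int : Integrable v μ := by
    refine (integrable_const R).mono' hv.aestronglyMeasurable ?_
    filter_upwards [hbd] with x hx
    rw [Real.norm_eq_abs, abs_of_nonneg hx.1]; exact hx.2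
  have hwmeas : Measurable fun x => min ζ (v x) := measurable_const.min hv
  have hw_int : Integrable (fun x => min ζ (v x)) μ := by
    refine (integrable_const R).mono' hwmeas.aestronglyMeasurable ?_
    filter_upwards [hbd] with x hx
    rw [Real.norm_eq_abs, abs_of_nonneg (le_min hζpos.le hx.1)]
    exact le_trans (min_le_left _ _) hζR.le
  set W : ℝ := ∫ x, min ζ (v x) ∂μ with hW
  have hWle : W ≤ m := by
    rw [← hmean]
    exact integral_mono hw_int hv_int fun x => min_le_right _ _
  -- rewrite the RHS integrand
  have hinner : (∫ y, (min ζ (v y) - m) ∂μ) = W - m := by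
    rw [integral_sub hw_int (integrable_const m), integral_const, probReal_univ]
    simp [hW]
  have hBeq : (∫ x, |(min ζ (v x) - m) - ∫ y, (min ζ (v y) - m) ∂μ| ∂μ)
      = ∫ x, |min ζ (v x) - W| ∂μ := by
    rw [hinner]
    congr 1
    funext x
    ring_nf
  set B : ℝ := ∫ x, |min ζ (v x) - W| ∂μ with hBdef
  have hB_int : Integrable (fun x => |min ζ (v x) - W|) μ :=
    (hw_int.sub (integrable_const W)).abs
  have hB0 : 0 ≤ B := integral_nonneg fun x => abs_nonneg _
  -- the set where v is large
  set s : Set Ω := {x | ζ ≤ v x} with hsdef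
  have hs : MeasurableSet s := measurableSet_le measurable_const hv
  set P : ℝ := (μ s).toReal with hP
  have hP0 : 0 ≤ P := ENNReal.toReal_nonneg
  -- ∫ (v - w) ≤ R * P
  have hD_int : Integrable (fun x => v x - min ζ (v x)) μ := hv_int.sub hw_int
  have hDle : (∫ x, (v x - min ζ (v x)) ∂μ) ≤ R * P := by
    have hmono : ∀ᵐ x ∂μ, v x - min ζ (v x) ≤ s.indicator (fun _ => R) x := by
      filter_upwards [hbd] with x hx
      by_cases hxs : x ∈ s
      · rw [Set.indicator_of_mem hxs]
        have : min ζ (v x) = ζ := min_eq_left hxs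
        rw [this]; linarith [hx.2]
      · rw [Set.indicator_of_notMem hxs]
        have : v x < ζ := lt_of_not_ge hxs
        rw [min_eq_right this.le]; simp
    calc (∫ x, (v x - min ζ (v x)) ∂μ)
        ≤ ∫ x, s.indicator (fun _ => R) x ∂μ :=
          integral_mono_ae hD_int ((integrable_const R).indicator hs) hmono
      _ = R * P := by rw [integral_indicator_const R hs]; simp [hP, mul_comm, Measure.real]
  have hD0 : 0 ≤ ∫ x, (v x - min ζ (v x)) ∂μ :=
    integral_nonneg fun x => sub_nonneg.mpr (min_le_right _ _)
  -- c * P ≤ B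
  have hcPB : c * P ≤ B := by
    have hmono : ∀ x, s.indicator (fun _ => c) x ≤ |min ζ (v x) - W| := by
      intro x
      by_cases hxs : x ∈ s
      · rw [Set.indicator_of_mem hxs]
        have hmin : min ζ (v x) = ζ := min_eq_left hxs
        rw [hmin, abs_of_nonneg (by rw [hζ]; linarith)]
        rw [hζ]; linarith
      · rw [Set.indicator_of_notMem hxs]; exact abs_nonneg _
    calc c * P = ∫ x, s.indicator (fun _ => c) x ∂μ := by
          rw [integral_indicator_const c hs]; simp [hP, mul_comm, Measure.real]
      _ ≤ B := integral_mono ((integrable_const c).indicator hs) hB_int hmono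
  -- m - W = ∫ (v - w)
  have hmW : m - W = ∫ x, (v x - min ζ (v x)) ∂μ := by
    rw [integral_sub hv_int hw_int, hmean]
  -- main pointwise bound and integral comparison
  have hA : (∫ x, |v x - m| ∂μ) ≤ (∫ x, (v x - min ζ (v x)) ∂μ) + (B + (m - W)) := by
    have hpt : ∀ x, |v x - m| ≤ (v x - min ζ (v x)) + (|min ζ (v x) - W| + (m - W)) := by
      intro x
      have h1 : |v x - m| ≤ |v x - min ζ (v x)| + |min ζ (v x) - W| + |W - m| := by
        have := abs_sub_le (v x) (min ζ (v x)) m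
        have h2 := abs_sub_le (min ζ (v x)) W m
        linarith
      have h3 : |v x - min ζ (v x)| = v x - min ζ (v x) :=
        abs_of_nonneg (sub_nonneg.mpr (min_le_right _ _))
      have h4 : |W - m| = m - W := by rw [abs_sub_comm]; exact abs_of_nonneg (by linarith)
      linarith
    calc (∫ x, |v x - m| ∂μ)
        ≤ ∫ x, ((v x - min ζ (v x)) + (|min ζ (v x) - W| + (m - W))) ∂μ :=
          integral_mono (hv_int.sub (integrable_const m)).abs
            (hD_int.add (hB_int.add (integrable_const _))) hpt
      _ = (∫ x, (v x - min ζ (v x)) ∂μ) + (B + (m - W)) := by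
          have hsum_int : Integrable (fun x => |min ζ (v x) - W| + (m - W)) μ :=
            hB_int.add (integrable_const (m - W))
          rw [integral_add hD_int hsum_int]
          congr 1
          rw [integral_add hB_int (integrable_const (m - W)), integral_const,
            probReal_univ]
          simp [hBdef]
  have hA' : (∫ x, |v x - m| ∂μ) ≤ B + 2 * (R * P) := by
    have := hDle
    rw [hmW] at *
    linarith
  -- conclude
  rw [hBeq]
  have hRc : R / c ≤ R / δ := by
    rw [div_le_div_iff_of_pos_left hR hc hδ]; nlinarith
  have hPB : P ≤ B / c := by
    rw [le_div_iff₀ hc]; linarith [hcPB]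
  have h2 : 2 * (R * P) ≤ 2 * (R / δ) * B := by
    have hstep : R * P ≤ R * (B / c) :=
      mul_le_mul_of_nonneg_left hPB hR.le
    have heq : R * (B / c) = (R / c) * B := by ring
    have hstep2 : (R / c) * B ≤ (R / δ) * B :=
      mul_le_mul_of_nonneg_right hRc hB0
    nlinarith
  have hRB : 0 ≤ (R / δ) * B := mul_nonneg (div_nonneg hR.le hδ.le) hB0
  nlinarith [hA', h2, hB0, hδ.le]
end

section
/- Let E ⊂ ℝ be a bounded Borel set and a : E → ℝ^d a bounded measurable map such that for every β ∈ S^{d−1} and every α ∈ ℝ, the Lebesgue measure of {ξ ∈ E : β·a(ξ) = α} is zero. Define ε(γ) = sup over α ∈ ℝ, β ∈ S^{d−1} of |{ξ ∈ E : |β·a(ξ) − α| ≤ γ}|. Then ε(γ) → 0 as γ → 0⁺. -/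
open MeasureTheory Filter

theorem sublevel_sets_uniformly_small (d : ℕ) (E : Set ℝ) (hE : MeasurableSet E)
    (hEbdd : Bornology.IsBounded E) (a : ℝ → (Fin d → ℝ)) (ha : Measurable a)
    (M : ℝ) (haM : ∀ ξ ∈ E, ∀ i, |a ξ i| ≤ M)
    (hnd : ∀ β : Fin d → ℝ, (∑ i, β i ^ 2) = 1 → ∀ α : ℝ,
      volume {ξ ∈ E | (∑ i, β i * a ξ i) = α} = 0) :
    Tendsto
      (fun γ : ℝ => ⨆ (α : ℝ) (β : Fin d → ℝ) (_ : (∑ i, β i ^ 2) = 1),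
        volume {ξ ∈ E | |(∑ i, β i * a ξ i) - α| ≤ γ})
      (nhdsWithin 0 (Set.Ioi 0)) (nhds 0) := by
  set S : ℝ → ℝ → (Fin d → ℝ) → Set ℝ := fun γ α β =>
    {ξ ∈ E | |(∑ i, β i * a ξ i) - α| ≤ γ} with hSdef
  set G : ℝ → ENNReal := fun γ => ⨆ (α : ℝ) (β : Fin d → ℝ) (_ : (∑ i, β i ^ 2) = 1),
    volume (S γ α β) with hGdef
  have hf : ∀ β : Fin d → ℝ, Measurable fun ξ => ∑ i, β i * a ξ i := fun β =>
    Finset.measurable_sum _ fun i _ =>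
      measurable_const.mul ((measurable_pi_apply i).comp ha)
  have hmeas : ∀ γ α β, MeasurableSet (S γ α β) := fun γ α β =>
    hE.inter (measurableSet_le ((hf β).sub measurable_const).abs measurable_const)
  have hEfin : volume E ≠ ⊤ := hEbdd.measure_lt_top.ne
  have Gmono : Monotone G := by
    intro γ γ' h
    refine iSup_mono fun α => iSup_mono fun β => iSup_mono' fun hb =>
      ⟨hb, measure_mono fun ξ hξ => ⟨hξ.1, hξ.2.trans h⟩⟩
  rw [ENNReal.tendsto_nhds_zero]
  intro ε hε
  have key : ∃ γ₀ > (0:ℝ), G γ₀ ≤ ε := by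
    by_contra hcon
    push_neg at hcon
    have hsel : ∀ n : ℕ, ∃ α : ℝ, ∃ β : Fin d → ℝ, (∑ i, β i ^ 2) = 1 ∧
        ε < volume (S (1/(n+1)) α β) := by
      intro n
      have h1 := hcon (1/(n+1)) (by positivity)
      rw [hGdef] at h1
      simp only [lt_iSup_iff] at h1
      obtain ⟨α, β, hβ, h1⟩ := h1
      exact ⟨α, β, hβ, h1⟩
    choose α β hβ hμ using hsel
    have hβle : ∀ n i, |β n i| ≤ 1 := by
      intro n i
      have h1 : (β n i)^2 ≤ 1 := by
        rw [← hβ n]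
        exact Finset.single_le_sum (f := fun j => β n j ^ 2) (fun j _ => sq_nonneg _) (Finset.mem_univ i)
      nlinarith [abs_nonneg (β n i), sq_abs (β n i)]
    have hsum_bound : ∀ n ξ, ξ ∈ E → |∑ i, β n i * a ξ i| ≤ d * |M| := by
      intro n ξ hξ
      calc |∑ i, β n i * a ξ i| ≤ ∑ i, |β n i * a ξ i| := Finset.abs_sum_le_sum_abs _ _
        _ ≤ ∑ _i : Fin d, |M| := by
            refine Finset.sum_le_sum fun i _ => ?_
            rw [abs_mul]
            have h2 : |a ξ i| ≤ |M| := (haM ξ hξ i).trans (le_abs_self M)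
            calc |β n i| * |a ξ i| ≤ 1 * |M| :=
              mul_le_mul (hβle n i) h2 (abs_nonneg _) zero_le_one
              _ = |M| := one_mul _
        _ = d * |M| := by simp [Finset.sum_const, mul_comm]
    have hαb : ∀ n, |α n| ≤ d * |M| + 1 := by
      intro n
      have hne : (S (1/(n+1)) (α n) (β n)).Nonempty :=
        nonempty_of_measure_ne_zero (hε.trans (hμ n)).ne'
      obtain ⟨ξ, hξE, hξle⟩ := hne
      have h1 : (1:ℝ)/(n+1) ≤ 1 := by
        rw [div_le_one (by positivity)]
        linarith [(Nat.cast_nonneg n : (0:ℝ) ≤ n)]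
      have h2 := hsum_bound n ξ hξE
      have h3 : |α n| - |∑ i, β n i * a ξ i| ≤ |α n - ∑ i, β n i * a ξ i| :=
        abs_sub_abs_le_abs_sub _ _
      rw [abs_sub_comm] at h3
      linarith
    have hbdd : ∀ n, (α n, β n) ∈ Metric.closedBall (0 : ℝ × (Fin d → ℝ)) (d * |M| + 1) := by
      intro n
      rw [Metric.mem_closedBall, dist_zero_right, Prod.norm_def]
      refine max_le (by simpa using hαb n) ?_
      refine (pi_norm_le_iff_of_nonneg (by positivity)).2 fun i => ?_
      have h1 : (1:ℝ) ≤ d * |M| + 1 := by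
        have h2 : (0:ℝ) ≤ d * |M| := by positivity
        linarith
      simpa using (hβle n i).trans h1
    obtain ⟨p, -, φ, hφ, hconv⟩ :=
      tendsto_subseq_of_bounded Metric.isBounded_closedBall hbdd
    have hαconv : Tendsto (fun n => α (φ n)) atTop (nhds p.1) :=
      (continuous_fst.tendsto p).comp hconv
    have hβconv : Tendsto (fun n => β (φ n)) atTop (nhds p.2) :=
      (continuous_snd.tendsto p).comp hconv
    have hβi : ∀ i, Tendsto (fun n => β (φ n) i) atTop (nhds (p.2 i)) :=
      fun i => tendsto_pi_nhds.1 hβconv i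
    have hβ₀ : (∑ i, p.2 i ^ 2) = 1 := by
      have h1 : Tendsto (fun n => ∑ i, β (φ n) i ^ 2) atTop (nhds (∑ i, p.2 i ^ 2)) :=
        tendsto_finset_sum _ fun i _ => (hβi i).pow 2
      have h2 : (fun n => ∑ i, β (φ n) i ^ 2) = fun _ => (1:ℝ) := funext fun n => hβ (φ n)
      rw [h2] at h1
      exact tendsto_nhds_unique h1 tendsto_const_nhds
    have hkey : ∀ δ : ℝ, 0 < δ → ε ≤ volume (S δ p.1 p.2) := by
      intro δ hδ
      have hδ3 : (0:ℝ) < δ/3 := by linarith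
      have t0 : Tendsto (fun n : ℕ => (1:ℝ)/(φ n + 1)) atTop (nhds 0) :=
        tendsto_one_div_add_atTop_nhds_zero_nat.comp hφ.tendsto_atTop
      have e1 : ∀ᶠ n in atTop, (1:ℝ)/(φ n + 1) ≤ δ/3 := t0.eventually_le_const hδ3
      have e2 : ∀ᶠ n in atTop, |α (φ n) - p.1| ≤ δ/3 := by
        have t1 : Tendsto (fun n => |α (φ n) - p.1|) atTop (nhds 0) := by
          have h := (hαconv.sub (tendsto_const_nhds (x := p.1))).abs
          simpa using h
        exact t1.eventually_le_const hδ3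
      have e3 : ∀ᶠ n in atTop, (∑ i, |β (φ n) i - p.2 i| * |M|) ≤ δ/3 := by
        have t1 : Tendsto (fun n => ∑ i, |β (φ n) i - p.2 i| * |M|) atTop (nhds 0) := by
          have := tendsto_finset_sum (Finset.univ : Finset (Fin d))
            (fun i _ => (((hβi i).sub (tendsto_const_nhds (x := p.2 i))).abs.mul
              (tendsto_const_nhds (x := |M|))))
          simpa using this
        exact t1.eventually_le_const hδ3
      obtain ⟨n, h1n, h2n, h3n⟩ := (e1.and (e2.and e3)).exists
      refine le_trans (hμ (φ n)).le (measure_mono ?_)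
      rintro ξ ⟨hξE, hle⟩
      refine ⟨hξE, ?_⟩
      have hd2 : |(∑ i, p.2 i * a ξ i) - ∑ i, β (φ n) i * a ξ i| ≤ δ/3 := by
        rw [← Finset.sum_sub_distrib]
        calc |∑ i, (p.2 i * a ξ i - β (φ n) i * a ξ i)|
            ≤ ∑ i, |(p.2 i - β (φ n) i) * a ξ i| := by
              simp_rw [← sub_mul]
              exact Finset.abs_sum_le_sum_abs _ _
          _ ≤ ∑ i, |β (φ n) i - p.2 i| * |M| := by
              refine Finset.sum_le_sum fun i _ => ?_
              rw [abs_mul, abs_sub_comm]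
              exact mul_le_mul_of_nonneg_left
                ((haM ξ hξE i).trans (le_abs_self M)) (abs_nonneg _)
          _ ≤ δ/3 := h3n
      have t1 := abs_sub_le (∑ i, p.2 i * a ξ i) (∑ i, β (φ n) i * a ξ i) p.1
      have t2 := abs_sub_le (∑ i, β (φ n) i * a ξ i) (α (φ n)) p.1
      linarith
    have hint : {ξ ∈ E | (∑ i, p.2 i * a ξ i) = p.1}
        = ⋂ k : ℕ, S (1/(k+1)) p.1 p.2 := by
      ext ξ
      simp only [Set.mem_iInter, Set.mem_setOf_eq, hSdef]
      constructor
      · rintro ⟨h1, h2⟩ k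
        exact ⟨h1, by rw [h2]; simp; positivity⟩
      · intro h
        refine ⟨(h 0).1, ?_⟩
        have hall : ∀ k : ℕ, |(∑ i, p.2 i * a ξ i) - p.1| ≤ 1/(k+1) := fun k => (h k).2
        have h0 : |(∑ i, p.2 i * a ξ i) - p.1| ≤ 0 :=
          ge_of_tendsto' tendsto_one_div_add_atTop_nhds_zero_nat hall
        have := le_antisymm h0 (abs_nonneg _)
        rw [abs_eq_zero, sub_eq_zero] at this
        exact this
    have hiInf : volume (⋂ k : ℕ, S (1/(k+1)) p.1 p.2)
        = ⨅ k : ℕ, volume (S (1/(k+1)) p.1 p.2) := by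
      refine Directed.measure_iInter (fun k => (hmeas _ _ _).nullMeasurableSet) ?_
        ⟨0, ((measure_mono fun ξ h => h.1).trans_lt hEbdd.measure_lt_top).ne⟩
      intro k l
      refine ⟨max k l, fun ξ hξ => ⟨hξ.1, hξ.2.trans ?_⟩, fun ξ hξ => ⟨hξ.1, hξ.2.trans ?_⟩⟩
      · apply one_div_le_one_div_of_le (by positivity)
        have : (k:ℝ) ≤ max k l := by exact_mod_cast le_max_left k l
        linarith
      · apply one_div_le_one_div_of_le (by positivity)
        have : (l:ℝ) ≤ max k l := by exact_mod_cast le_max_right k l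
        linarith
    have hle0 : ε ≤ 0 := by
      rw [← hnd p.2 hβ₀ p.1, hint, hiInf]
      exact le_iInf fun k => hkey _ (by positivity)
    exact absurd hle0 (not_le_of_gt hε)
  obtain ⟨γ₀, hγ₀, hGγ₀⟩ := key
  filter_upwards [Ioo_mem_nhdsGT_of_mem (Set.left_mem_Ico.2 hγ₀)] with γ hγ
  exact le_trans (Gmono hγ.2.le) hGγ₀
end
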